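/- If P ⪰ 0, C ⪰ 0, V has range(Vᵀ) ⊆ range(C), and P - VC†Vᵀ ⪰ 0, then the bordered matrix [[Qx + AᵀPA, Qxw + AᵀPB, AᵀV],[Qxwᵀ + BᵀPA, Qw + BᵀPB, BᵀV],[VᵀA, VᵀB, C]] is positive semidefinite whenever [[Qx,Qxw],[Qxwᵀ,Qw]] ⪰ 0. -/

import Mathlib

open Matrix

/-- The four Moore–Penrose conditions: `Dp` is the Moore–Penrose pseudoinverse of `D`. -/
def IsMP {α : Type*} [Fintype α] [DecidableEq α] (D Dp : Matrix α α ℝ) : Prop :=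
  D * Dp * D = D ∧ Dp * D * Dp = Dp ∧ (D * Dp)ᵀ = D * Dp ∧ (Dp * D)ᵀ = Dp * D

lemma psd_diag {α β : Type*} [Fintype α] [Fintype β] {S : Matrix α α ℝ} {T : Matrix β β ℝ}
    (hS : S.PosSemidef) (hT : T.PosSemidef) : (fromBlocks S 0 0 T).PosSemidef := by
  rw [posSemidef_iff_dotProduct_mulVec]
  constructor
  · rw [IsHermitian, fromBlocks_conjTranspose]
    simp only [fromBlocks_inj]
    refine ⟨hS.1, ?_, ?_, hT.1⟩ <;> simp
  · intro x
    simp only [fromBlocks_mulVec, dotProduct_block, Sum.elim_comp_inl, Sum.elim_comp_inr,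
      zero_mulVec, mulVec_zero, add_zero, zero_add]
    exact add_nonneg (hS.dotProduct_mulVec_nonneg _) (hT.dotProduct_mulVec_nonneg _)

lemma my_fromColumns_add {α β γ : Type*} (A₁ : Matrix α β ℝ) (A₂ : Matrix α γ ℝ)
    (B₁ : Matrix α β ℝ) (B₂ : Matrix α γ ℝ) :
    fromCols A₁ A₂ + fromCols B₁ B₂ = fromCols (A₁ + B₁) (A₂ + B₂) := by
  ext _ (_ | _) <;> rfl

lemma my_fromRows_add {α β γ : Type*} (A₁ : Matrix β α ℝ) (A₂ : Matrix γ α ℝ)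
    (B₁ : Matrix β α ℝ) (B₂ : Matrix γ α ℝ) :
    fromRows A₁ A₂ + fromRows B₁ B₂ = fromRows (A₁ + B₁) (A₂ + B₂) := by
  ext (_ | _) _ <;> rfl

lemma my_fc_zero_right {α β γ δ : Type*} (A₁ : Matrix α γ ℝ) (A₂ : Matrix β γ ℝ) :
    fromCols (fromRows A₁ A₂) (0 : Matrix (α ⊕ β) δ ℝ) = fromBlocks A₁ 0 A₂ 0 := by
  rw [← fromRows_zero, fromCols_fromRows_eq_fromBlocks]

lemma my_fc_zero_left {α β γ δ : Type*} (A₁ : Matrix α γ ℝ) (A₂ : Matrix β γ ℝ) :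
    fromCols (0 : Matrix (α ⊕ β) δ ℝ) (fromRows A₁ A₂) = fromBlocks 0 A₁ 0 A₂ := by
  rw [← fromRows_zero, fromCols_fromRows_eq_fromBlocks]

lemma my_fromColumns_zero_right {α β γ : Type*} (A₁ : Matrix α β ℝ) :
    fromCols A₁ (0 : Matrix α γ ℝ) + fromCols 0 (0 : Matrix α γ ℝ) = fromCols A₁ 0 := by
  simp

lemma psd_N {n k : ℕ} (P : Matrix (Fin n) (Fin n) ℝ) (V : Matrix (Fin n) (Fin k) ℝ)
    (C Cp : Matrix (Fin k) (Fin k) ℝ)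
    (hC : C.PosSemidef)
    (hV : ∃ Y : Matrix (Fin k) (Fin n) ℝ, Vᵀ = C * Y)
    (h1 : C * Cp * C = C)
    (hPt : (P - V * Cp * Vᵀ).PosSemidef) :
    (fromBlocks P V Vᵀ C).PosSemidef := by
  obtain ⟨Y, hY⟩ := hV
  have hCsym : Cᵀ = C := hC.1
  have hVY : V = Yᵀ * C := by
    have := congrArg Matrix.transpose hY
    simpa [Matrix.transpose_mul, hCsym] using this
  have h1' : C * Cpᵀ * C = C := by
    have := congrArg Matrix.transpose h1
    simpa [Matrix.transpose_mul, hCsym, Matrix.mul_assoc] using this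
  have hVCpC : V * Cp * C = V := by
    rw [hVY, Matrix.mul_assoc, Matrix.mul_assoc, ← Matrix.mul_assoc C Cp C, h1]
  have hCCptVt : C * Cpᵀ * Vᵀ = Vᵀ := by
    rw [hY, ← Matrix.mul_assoc, h1']
  have e1 : V * Cpᵀ * Vᵀ = Yᵀ * (C * Cpᵀ * C) * Y := by
    rw [hY]; conv_lhs => rw [hVY]
    simp only [Matrix.mul_assoc]
  have e2 : V * Cp * Vᵀ = Yᵀ * (C * Cp * C) * Y := by
    rw [hY]; conv_lhs => rw [hVY]
    simp only [Matrix.mul_assoc]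
  have hVCptVt : V * Cpᵀ * Vᵀ = V * Cp * Vᵀ := by rw [e1, e2, h1, h1']
  have hD : (fromBlocks (P - V * Cp * Vᵀ) 0 0 C).PosSemidef := psd_diag hPt hC
  have key : fromBlocks P V Vᵀ C =
      (fromBlocks 1 (V * Cp) 0 1) * (fromBlocks (P - V * Cp * Vᵀ) 0 0 C) *
        (fromBlocks 1 (V * Cp) 0 1)ᴴ := by
    rw [fromBlocks_conjTranspose]
    simp only [conjTranspose_eq_transpose_of_trivial, fromBlocks_multiply,
      Matrix.mul_zero, Matrix.zero_mul, Matrix.one_mul, Matrix.mul_one,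
      add_zero, zero_add, transpose_one, transpose_zero, transpose_mul]
    rw [fromBlocks_inj]
    refine ⟨?_, ?_, ?_, rfl⟩
    · try simp only [← Matrix.mul_assoc]
      rw [hVCpC, hVCptVt, sub_add_cancel]
    · try simp only [← Matrix.mul_assoc]
      exact hVCpC.symm
    · try simp only [← Matrix.mul_assoc]
      exact hCCptVt.symm
  rw [key]
  exact hD.mul_mul_conjTranspose_same _

theorem bordered_M_hat_psd {n m k : ℕ}
    (A : Matrix (Fin n) (Fin n) ℝ) (B : Matrix (Fin n) (Fin m) ℝ)
    (P : Matrix (Fin n) (Fin n) ℝ)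
    (Qx : Matrix (Fin n) (Fin n) ℝ) (Qxw : Matrix (Fin n) (Fin m) ℝ)
    (Qw : Matrix (Fin m) (Fin m) ℝ)
    (V : Matrix (Fin n) (Fin k) ℝ) (C Cp : Matrix (Fin k) (Fin k) ℝ)
    (hP : P.PosSemidef) (hC : C.PosSemidef)
    (hV : ∃ Y : Matrix (Fin k) (Fin n) ℝ, Vᵀ = C * Y)
    (hCp : IsMP C Cp)
    (hPt : (P - V * Cp * Vᵀ).PosSemidef)
    (hQ : (Matrix.fromBlocks Qx Qxw Qxwᵀ Qw).PosSemidef) :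
    (Matrix.fromBlocks (Qx + Aᵀ * P * A)
      (Matrix.fromCols (Qxw + Aᵀ * P * B) (Aᵀ * V))
      (Matrix.fromRows (Qxwᵀ + Bᵀ * P * A) (Vᵀ * A))
      (Matrix.fromBlocks (Qw + Bᵀ * P * B) (Bᵀ * V) (Vᵀ * B) C)).PosSemidef := by
  have hN : (fromBlocks P V Vᵀ C).PosSemidef := psd_N P V C Cp hC hV hCp.1 hPt
  set X : Matrix (Fin n ⊕ Fin k) (Fin n ⊕ (Fin m ⊕ Fin k)) ℝ :=
    fromBlocks A (fromCols B 0) 0 (fromCols 0 1) with hX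
  set Y1 : Matrix (Fin n ⊕ Fin m) (Fin n ⊕ (Fin m ⊕ Fin k)) ℝ :=
    fromBlocks 1 0 0 (fromCols 1 0) with hY1
  have h2 : (Xᴴ * (fromBlocks P V Vᵀ C) * X).PosSemidef := hN.conjTranspose_mul_mul_same X
  have h1 : (Y1ᴴ * (fromBlocks Qx Qxw Qxwᵀ Qw) * Y1).PosSemidef := hQ.conjTranspose_mul_mul_same Y1
  have key : Matrix.fromBlocks (Qx + Aᵀ * P * A)
      (Matrix.fromCols (Qxw + Aᵀ * P * B) (Aᵀ * V))
      (Matrix.fromRows (Qxwᵀ + Bᵀ * P * A) (Vᵀ * A))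
      (Matrix.fromBlocks (Qw + Bᵀ * P * B) (Bᵀ * V) (Vᵀ * B) C) =
      Y1ᴴ * (fromBlocks Qx Qxw Qxwᵀ Qw) * Y1 + Xᴴ * (fromBlocks P V Vᵀ C) * X := by
    rw [hX, hY1]
    simp only [conjTranspose_eq_transpose_of_trivial, fromBlocks_transpose,
      transpose_fromCols, transpose_one, transpose_zero,
      fromBlocks_multiply, fromRows_mul, mul_fromCols, fromRows_mul_fromCols,
      Matrix.mul_one, Matrix.one_mul, Matrix.mul_zero, Matrix.zero_mul,
      add_zero, zero_add, fromRows_zero, fromCols_zero,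
      my_fromColumns_add, my_fromRows_add, fromBlocks_add,
      fromRows_fromCols_eq_fromBlocks, fromCols_fromRows_eq_fromBlocks, my_fc_zero_right, my_fc_zero_left, Matrix.mul_assoc]
  rw [key]
  exact h1.add h2
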